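/- For an OPP o of length m, the number of permutations f of {1,...,m} that are fusion patterns of o (i.e., satisfying suffixorder(o) = prefixorder(f)) is exactly m. -/

import Mathlib

/-- Rank of entry `j` among the entries of `q` (1-indexed rank). -/
def rankMap {α : Type*} [LinearOrder α] {m : ℕ} (q : Fin m → α) : Fin m → ℕ :=
  fun j => (Finset.univ.filter fun i => q i ≤ q j).card

/-- `x` is an order-preserving pattern (a permutation of `{1,...,m}` written as a sequence). -/
def IsOPP {m : ℕ} (x : Fin m → ℕ) : Prop :=
  Function.Injective x ∧ ∀ j, 1 ≤ x j ∧ x j ≤ m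

/-- The length-`ℓ` window of the (1-indexed) time series `k` ending at index `c`. -/
def window (k : ℕ → ℝ) (c ℓ : ℕ) : Fin ℓ → ℝ :=
  fun j => k (c - ℓ + 1 + (j : ℕ))

/-- `c` is an occurrence (end index) of pattern `p` in the time series `k` of length `n`. -/
def isOcc (k : ℕ → ℝ) (n : ℕ) {ℓ : ℕ} (p : Fin ℓ → ℕ) (c : ℕ) : Prop :=
  ℓ ≤ c ∧ c ≤ n ∧ rankMap (window k c ℓ) = p

/-- Relative order of the first `m` entries of `x`. -/
def prefixorder {α : Type*} [LinearOrder α] {m : ℕ} (x : Fin (m+1) → α) : Fin m → ℕ :=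
  rankMap (fun j : Fin m => x j.castSucc)

/-- Relative order of the last `m` entries of `x`. -/
def suffixorder {α : Type*} [LinearOrder α] {m : ℕ} (x : Fin (m+1) → α) : Fin m → ℕ :=
  rankMap (fun j : Fin m => x j.succ)

open Classical in
/-- The set of occurrences of `p` in `k`. -/
noncomputable def occSet (k : ℕ → ℝ) (n : ℕ) {ℓ : ℕ} (p : Fin ℓ → ℕ) : Finset ℕ :=
  (Finset.Icc 1 n).filter fun c => isOcc k n p c

/-- The support of `p` in `k`. -/
noncomputable def supp (k : ℕ → ℝ) (n : ℕ) {ℓ : ℕ} (p : Fin ℓ → ℕ) : ℕ :=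
  (occSet k n p).card

lemma rank_le_rank {α : Type*} [LinearOrder α] {m : ℕ} (q : Fin m → α) (i j : Fin m) :
    rankMap q i ≤ rankMap q j ↔ q i ≤ q j := by
  constructor
  · intro h
    by_contra hq
    push_neg at hq
    have hsub : (Finset.univ.filter fun k => q k ≤ q j) ⊆ (Finset.univ.filter fun k => q k ≤ q i) := by
      intro k hk
      simp only [Finset.mem_filter, Finset.mem_univ, true_and] at hk ⊢
      exact hk.trans hq.le
    have hss : (Finset.univ.filter fun k => q k ≤ q j) ⊂ (Finset.univ.filter fun k => q k ≤ q i) := by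
      rw [Finset.ssubset_iff_of_subset hsub]
      exact ⟨i, by simp, by simp [not_le.mpr hq]⟩
    exact absurd h (not_le.mpr (Finset.card_lt_card hss))
  · intro h
    apply Finset.card_le_card
    intro k hk
    simp only [Finset.mem_filter, Finset.mem_univ, true_and] at hk ⊢
    exact hk.trans h

lemma eq_of_card_filter_le {β : Type*} [LinearOrder β] [DecidableEq β] (S : Finset β) {x y : β}
    (hx : x ∈ S) (hy : y ∈ S)
    (h : (S.filter (· ≤ x)).card = (S.filter (· ≤ y)).card) : x = y := by
  rcases lt_trichotomy x y with hlt | he | hlt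
  · exfalso
    have hsub : S.filter (· ≤ x) ⊆ S.filter (· ≤ y) := by
      intro k hk
      simp only [Finset.mem_filter] at hk ⊢
      exact ⟨hk.1, hk.2.trans hlt.le⟩
    have hss : S.filter (· ≤ x) ⊂ S.filter (· ≤ y) := by
      rw [Finset.ssubset_iff_of_subset hsub]
      exact ⟨y, by simp [hy], by simp [not_le.mpr hlt]⟩
    exact absurd h (Finset.card_lt_card hss).ne
  · exact he
  · exfalso
    have hsub : S.filter (· ≤ y) ⊆ S.filter (· ≤ x) := by
      intro k hk
      simp only [Finset.mem_filter] at hk ⊢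
      exact ⟨hk.1, hk.2.trans hlt.le⟩
    have hss : S.filter (· ≤ y) ⊂ S.filter (· ≤ x) := by
      rw [Finset.ssubset_iff_of_subset hsub]
      exact ⟨x, by simp [hx], by simp [not_le.mpr hlt]⟩
    exact absurd h (Finset.card_lt_card hss).ne'

lemma eq_of_same_image_same_order {β : Type*} [LinearOrder β] [DecidableEq β] {m : ℕ}
    {a b : Fin m → β} (ha : Function.Injective a) (hb : Function.Injective b)
    (himg : Finset.univ.image a = Finset.univ.image b)
    (hcomp : ∀ i j, a i ≤ a j ↔ b i ≤ b j) : a = b := by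
  funext j
  set S := Finset.univ.image a with hS
  have hbj : b j ∈ S := by rw [himg]; exact Finset.mem_image_of_mem b (Finset.mem_univ j)
  apply eq_of_card_filter_le S (Finset.mem_image_of_mem a (Finset.mem_univ j)) hbj
  have h1 : S.filter (· ≤ a j) = (Finset.univ.filter fun i => a i ≤ a j).image a := by
    ext x
    simp only [Finset.mem_filter, Finset.mem_image, Finset.mem_univ, true_and, hS]
    constructor
    · rintro ⟨⟨i, rfl⟩, hle⟩; exact ⟨i, hle, rfl⟩
    · rintro ⟨i, hle, rfl⟩; exact ⟨⟨i, rfl⟩, hle⟩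
  have h2 : S.filter (· ≤ b j) = (Finset.univ.filter fun i => b i ≤ b j).image b := by
    ext x
    simp only [Finset.mem_filter, Finset.mem_image, Finset.mem_univ, true_and, himg, hS]
    constructor
    · rintro ⟨⟨i, rfl⟩, hle⟩; exact ⟨i, hle, rfl⟩
    · rintro ⟨i, hle, rfl⟩; exact ⟨⟨i, rfl⟩, hle⟩
  rw [h1, h2, Finset.card_image_of_injective _ ha, Finset.card_image_of_injective _ hb]
  congr 1
  apply Finset.filter_congr
  intro i _
  simpa using hcomp i j

lemma cond_iff {m : ℕ} (o : Fin (m+1) → ℕ) (σ : Equiv.Perm (Fin (m+1))) :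
    suffixorder o = prefixorder (fun j => (σ j : ℕ) + 1) ↔
      ∀ i j : Fin m, (o i.succ ≤ o j.succ ↔ σ i.castSucc ≤ σ j.castSucc) := by
  have key : ∀ i j : Fin m,
      ((σ i.castSucc : ℕ) + 1 ≤ (σ j.castSucc : ℕ) + 1 ↔ σ i.castSucc ≤ σ j.castSucc) := by
    intro i j
    rw [Fin.le_def]
    omega
  constructor
  · intro h i j
    have h1 := rank_le_rank (fun j : Fin m => o j.succ) i j
    have h2 := rank_le_rank (fun j : Fin m => (σ j.castSucc : ℕ) + 1) i j
    have he : rankMap (fun j : Fin m => o j.succ) = rankMap (fun j : Fin m => (σ j.castSucc : ℕ) + 1) := h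
    rw [← h1, he, h2, key]
  · intro h
    funext j
    unfold suffixorder prefixorder rankMap
    congr 1
    apply Finset.filter_congr
    intro i _
    simp only [(key i j), h i j]

lemma image_castSucc_perm {m : ℕ} (σ : Equiv.Perm (Fin (m+1))) :
    Finset.univ.image (fun i : Fin m => σ i.castSucc) =
      Finset.univ.erase (σ (Fin.last m)) := by
  have hinj : Function.Injective (fun i : Fin m => σ i.castSucc) :=
    fun i j h => Fin.castSucc_injective m (σ.injective h)
  symm
  apply Finset.eq_of_subset_of_card_le
  · intro x hx
    obtain ⟨y, rfl⟩ := σ.surjective x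
    have hy : y ≠ Fin.last m := by
      intro h
      subst h
      exact (Finset.notMem_erase _ _) hx
    obtain ⟨i, rfl⟩ := Fin.eq_castSucc_of_ne_last hy
    simp only [Finset.mem_image, Finset.mem_univ, true_and]
    exact ⟨i, rfl⟩
  · rw [Finset.card_image_of_injective _ hinj,
      Finset.card_erase_of_mem (Finset.mem_univ _)]
    simp

open Classical in
theorem stmt6 {m : ℕ} (o : Fin (m+1) → ℕ) (ho : IsOPP o) :
    (Finset.univ.filter fun σ : Equiv.Perm (Fin (m+1)) =>
        suffixorder o = prefixorder (fun j => (σ j : ℕ) + 1)).card = m + 1 := by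
  have hw : Function.Injective (fun j : Fin m => o j.succ) :=
    fun i j h => Fin.succ_injective m (ho.1 h)
  have hcard : (Finset.univ.filter fun σ : Equiv.Perm (Fin (m+1)) =>
        suffixorder o = prefixorder (fun j => (σ j : ℕ) + 1)).card
      = (Finset.univ : Finset (Fin (m+1))).card := by
    apply Finset.card_bij (fun σ _ => σ (Fin.last m))
    · intro σ _; exact Finset.mem_univ _
    · -- injectivity
      intro σ hσ τ hτ hlast
      simp only [Finset.mem_filter, Finset.mem_univ, true_and] at hσ hτ
      have hσ' := (cond_iff o σ).mp hσ
      have hτ' := (cond_iff o τ).mp hτ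
      have hainj : Function.Injective (fun i : Fin m => σ i.castSucc) :=
        fun i j h => Fin.castSucc_injective m (σ.injective h)
      have hbinj : Function.Injective (fun i : Fin m => τ i.castSucc) :=
        fun i j h => Fin.castSucc_injective m (τ.injective h)
      have himg : Finset.univ.image (fun i : Fin m => σ i.castSucc)
          = Finset.univ.image (fun i : Fin m => τ i.castSucc) := by
        rw [image_castSucc_perm, image_castSucc_perm, hlast]
      have hab := eq_of_same_image_same_order hainj hbinj himg
        (fun i j => ((hσ' i j).symm.trans (hτ' i j)))
      ext k
      induction k using Fin.lastCases with
      | last => exact congrArg Fin.val hlast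
      | cast i => exact congrArg Fin.val (congrFun hab i)
    · -- surjectivity
      intro v _
      set w : Fin m → ℕ := fun j => o j.succ with hwdef
      set S : Finset ℕ := Finset.univ.image w with hSdef
      have hScard : S.card = m := by
        rw [hSdef, Finset.card_image_of_injective _ hw]; simp
      set eS := S.orderIsoOfFin hScard with heS
      have hwS : ∀ j, w j ∈ S := fun j => Finset.mem_image_of_mem w (Finset.mem_univ j)
      set r : Fin m → Fin m := fun j => eS.symm ⟨w j, hwS j⟩ with hrdef
      have hr : ∀ i j, r i ≤ r j ↔ w i ≤ w j := by
        intro i j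
        rw [hrdef]
        simp only [OrderIso.le_iff_le]
        exact Subtype.mk_le_mk
      have hrinj : Function.Injective r := by
        intro i j h
        have := eS.symm.injective h
        exact hw (Subtype.mk_eq_mk.mp this)
      set T : Finset (Fin (m+1)) := Finset.univ.erase v with hTdef
      have hTcard : T.card = m := by
        rw [hTdef, Finset.card_erase_of_mem (Finset.mem_univ _)]; simp
      set e := T.orderIsoOfFin hTcard with he
      set g : Fin (m+1) → Fin (m+1) :=
        Fin.lastCases v (fun j => (e (r j) : Fin (m+1))) with hg
      have hglast : g (Fin.last m) = v := by rw [hg]; exact Fin.lastCases_last ..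
      have hgcast : ∀ j : Fin m, g j.castSucc = (e (r j) : Fin (m+1)) := by
        intro j; rw [hg]; exact Fin.lastCases_castSucc ..
      have hgne : ∀ j : Fin m, g j.castSucc ≠ v := by
        intro j hc
        rw [hgcast j] at hc
        have hv : v ∈ T := by rw [← hc]; exact (e (r j)).2
        exact Finset.notMem_erase v Finset.univ hv
      have hginj : Function.Injective g := by
        intro x y hxy
        induction x using Fin.lastCases with
        | last =>
          induction y using Fin.lastCases with
          | last => rfl
          | cast j => exact absurd (hglast ▸ hxy.symm) (hgne j)
        | cast i =>
          induction y using Fin.lastCases with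
          | last => exact absurd (hglast ▸ hxy) (hgne i)
          | cast j =>
            rw [hgcast i, hgcast j] at hxy
            exact congrArg Fin.castSucc (hrinj (e.injective (Subtype.ext hxy)))
      refine ⟨Equiv.ofBijective g (Finite.injective_iff_bijective.mp hginj), ?_, ?_⟩
      · simp only [Finset.mem_filter, Finset.mem_univ, true_and]
        apply (cond_iff o _).mpr
        intro i j
        show o i.succ ≤ o j.succ ↔ g i.castSucc ≤ g j.castSucc
        rw [hgcast i, hgcast j]
        rw [show ((e (r i) : Fin (m+1)) ≤ (e (r j) : Fin (m+1))) ↔ e (r i) ≤ e (r j) from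
          Subtype.coe_le_coe]
        rw [e.le_iff_le, hr i j]
      · exact hglast
  rw [hcard]
  simp
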